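/- If b = p/q ∈ ℚ (with q ∈ ℕ, q ≥ 1), then the system ẋ = x(1-x), ẏ = y(n + b x - y) admits the rational first integral H(x,y) = y^q (1-x)^{nq+p} / F(x,y)^q, where F is the degree-n invariant polynomial with cofactor n - n x - y; i.e., x(1-x)·∂H/∂x + y(n + b x - y)·∂H/∂y = 0 as rational functions. -/

import Mathlib

/-- Pochhammer symbol `(c)_n = c(c+1)⋯(c+n-1)`. -/
noncomputable def poch (c : ℝ) (n : ℕ) : ℝ := ∏ i ∈ Finset.range n, (c + i)

/-- The function `F(x,y) = y (n-1)! Σ_{ν=0}^{n-1} (-1)^{n+ν} (n+b-ν+1)_ν x^ν/ν! + (b+1)_n x^n`. -/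
noncomputable def Fval (n : ℕ) (b : ℝ) (x y : ℝ) : ℝ :=
  y * (Nat.factorial (n - 1) : ℝ) *
      ∑ ν ∈ Finset.range n,
        (-1) ^ (n + ν) * poch ((n : ℝ) + b - ν + 1) ν * x ^ ν / (Nat.factorial ν : ℝ)
    + poch (b + 1) n * x ^ n

/-- coefficient `a_ν = (-1)^{n+ν} (n+b-ν+1)_ν / ν!`. -/
noncomputable def aco (n : ℕ) (b : ℝ) (ν : ℕ) : ℝ :=
  (-1) ^ (n + ν) * poch ((n : ℝ) + b - ν + 1) ν / (Nat.factorial ν : ℝ)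

lemma poch_succ' (c : ℝ) (k : ℕ) : poch c (k + 1) = c * poch (c + 1) k := by
  unfold poch
  rw [Finset.prod_range_succ']
  simp only [Nat.cast_zero, add_zero, Nat.cast_add, Nat.cast_one]
  rw [mul_comm]
  congr 1
  apply Finset.prod_congr rfl
  intro i _
  ring

lemma key_step (n : ℕ) (b : ℝ) (ν : ℕ) :
    ((n : ℝ) + b - ν) * aco n b ν = -(((ν : ℝ) + 1) * aco n b (ν + 1)) := by
  have hfne : (Nat.factorial ν : ℝ) ≠ 0 := Nat.cast_ne_zero.mpr (Nat.factorial_ne_zero ν)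
  unfold aco
  push_cast
  have e : (n : ℝ) + b - ((ν : ℝ) + 1) + 1 = (n : ℝ) + b - ν := by ring
  rw [e, poch_succ', Nat.factorial_succ, show n + (ν + 1) = (n + ν) + 1 from rfl, pow_succ]
  push_cast
  field_simp

/-- The telescoping polynomial identity:
`x(1-x)·S'(x) + (n+b)·x·S(x) = -(n·a_n)·x^n`. -/
lemma sum_identity (n : ℕ) (b : ℝ) (x : ℝ) :
    x * (1 - x) * (∑ ν ∈ Finset.range n, aco n b ν * ((ν : ℝ) * x ^ (ν - 1)))
      + ((n : ℝ) + b) * x * (∑ ν ∈ Finset.range n, aco n b ν * x ^ ν)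
      = -((n : ℝ) * aco n b n * x ^ n) := by
  have step : x * (1 - x) * (∑ ν ∈ Finset.range n, aco n b ν * ((ν : ℝ) * x ^ (ν - 1)))
      + ((n : ℝ) + b) * x * (∑ ν ∈ Finset.range n, aco n b ν * x ^ ν)
      = ∑ ν ∈ Finset.range n,
        (x * (1 - x) * (aco n b ν * ((ν : ℝ) * x ^ (ν - 1)))
          + ((n : ℝ) + b) * x * (aco n b ν * x ^ ν)) := by
    rw [Finset.mul_sum, Finset.mul_sum, ← Finset.sum_add_distrib]
  rw [step]
  have hterm : ∀ ν ∈ Finset.range n,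
      x * (1 - x) * (aco n b ν * ((ν : ℝ) * x ^ (ν - 1)))
        + ((n : ℝ) + b) * x * (aco n b ν * x ^ ν)
      = (fun k : ℕ => (k : ℝ) * aco n b k * x ^ k) ν
        - (fun k : ℕ => (k : ℝ) * aco n b k * x ^ k) (ν + 1) := by
    intro ν _
    have hpow : x * ((ν : ℝ) * x ^ (ν - 1)) = (ν : ℝ) * x ^ ν := by
      cases ν with
      | zero => simp
      | succ k => rw [Nat.succ_sub_one, pow_succ]; ring
    simp only
    have h2 : x * (1 - x) * (aco n b ν * ((ν : ℝ) * x ^ (ν - 1)))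
        = (1 - x) * aco n b ν * ((ν : ℝ) * x ^ ν) := by
      calc x * (1 - x) * (aco n b ν * ((ν : ℝ) * x ^ (ν - 1)))
          = (1 - x) * aco n b ν * (x * ((ν : ℝ) * x ^ (ν - 1))) := by ring
        _ = (1 - x) * aco n b ν * ((ν : ℝ) * x ^ ν) := by rw [hpow]
    rw [h2]
    have h3 : ((ν : ℝ) + 1) * aco n b (ν + 1) * x ^ (ν + 1)
        = -(((n : ℝ) + b - ν) * aco n b ν) * x ^ (ν + 1) := by
      rw [key_step n b ν]; ring
    push_cast
    rw [h3, pow_succ]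
    ring
  rw [Finset.sum_congr rfl hterm,
    Finset.sum_range_sub' (fun k : ℕ => (k : ℝ) * aco n b k * x ^ k) n]
  simp

lemma Fval_rep (n : ℕ) (b : ℝ) (u v : ℝ) :
    Fval n b u v = v * (Nat.factorial (n - 1) : ℝ) *
        (∑ ν ∈ Finset.range n, aco n b ν * u ^ ν) + poch (b + 1) n * u ^ n := by
  unfold Fval
  congr 1
  rw [mul_assoc, mul_assoc]
  congr 1
  congr 1
  apply Finset.sum_congr rfl
  intro ν _
  unfold aco
  ring

lemma hA_lemma (n : ℕ) (hn : 1 ≤ n) (b : ℝ) :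
    (n : ℝ) * (Nat.factorial (n - 1) : ℝ) * aco n b n = poch (b + 1) n := by
  obtain ⟨k, rfl⟩ : ∃ k, n = k + 1 := ⟨n - 1, (Nat.succ_pred_eq_of_pos hn).symm⟩
  unfold aco
  have h1 : ((k + 1 : ℕ) : ℝ) + b - ((k + 1 : ℕ) : ℝ) + 1 = b + 1 := by ring
  rw [h1]
  have h2 : ((-1 : ℝ)) ^ (k + 1 + (k + 1)) = 1 := by
    have : Even (k + 1 + (k + 1)) := ⟨k + 1, rfl⟩
    exact this.neg_one_pow
  rw [h2]
  have h3 : (Nat.factorial (k + 1) : ℝ) = ((k + 1 : ℕ) : ℝ) * (Nat.factorial (k + 1 - 1) : ℝ) := by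
    rw [Nat.factorial_succ]; push_cast; ring
  rw [h3]
  have h4 : ((k + 1 : ℕ) : ℝ) ≠ 0 := by positivity
  have h5 : (Nat.factorial (k + 1 - 1) : ℝ) ≠ 0 :=
    Nat.cast_ne_zero.mpr (Nat.factorial_ne_zero _)
  field_simp

/-- The PDE satisfied by `F`: `x(1-x)F_x + y(n+bx-y)F_y = (n-nx-y)F`. -/
lemma pde (n : ℕ) (hn : 1 ≤ n) (b x y : ℝ) :
    x * (1 - x) * (y * (Nat.factorial (n - 1) : ℝ) *
          (∑ ν ∈ Finset.range n, aco n b ν * ((ν : ℝ) * x ^ (ν - 1)))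
        + poch (b + 1) n * ((n : ℝ) * x ^ (n - 1)))
      + y * ((n : ℝ) + b * x - y) *
          ((Nat.factorial (n - 1) : ℝ) * (∑ ν ∈ Finset.range n, aco n b ν * x ^ ν))
      = ((n : ℝ) - n * x - y) * Fval n b x y := by
  rw [Fval_rep]
  have hsum := sum_identity n b x
  have hA := hA_lemma n hn b
  have hxp : x * x ^ (n - 1) = x ^ n := by
    obtain ⟨k, rfl⟩ : ∃ k, n = k + 1 := ⟨n - 1, (Nat.succ_pred_eq_of_pos hn).symm⟩
    rw [Nat.succ_sub_one, pow_succ]; ring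
  set C := (Nat.factorial (n - 1) : ℝ)
  set S := ∑ ν ∈ Finset.range n, aco n b ν * x ^ ν
  set S' := ∑ ν ∈ Finset.range n, aco n b ν * ((ν : ℝ) * x ^ (ν - 1))
  linear_combination (y * C) * hsum + (-y * x ^ n) * hA
    + (poch (b + 1) n * (n : ℝ) * (1 - x)) * hxp

/-- If `b = p/q ∈ ℚ` (with `q ≥ 1`), then `H(x,y) = y^q (1-x)^{nq+p} / F(x,y)^q` is a
rational first integral of `ẋ = x(1-x)`, `ẏ = y(n+bx-y)`:
`x(1-x)H_x + y(n+bx-y)H_y = 0` away from the poles. -/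
theorem rational_first_integral (n : ℕ) (hn : 1 ≤ n) (p : ℤ) (q : ℕ) (hq : 1 ≤ q)
    (b : ℝ) (hb : b = (p : ℝ) / (q : ℝ)) (x y : ℝ) (hx : 1 - x ≠ 0)
    (hF : Fval n b x y ≠ 0) :
    x * (1 - x) *
          deriv (fun t => y ^ q * (1 - t) ^ ((n : ℤ) * q + p) / (Fval n b t y) ^ q) x
        + y * ((n : ℝ) + b * x - y) *
          deriv (fun t => t ^ q * (1 - x) ^ ((n : ℤ) * q + p) / (Fval n b x t) ^ q) y
      = 0 := by
  have hqR : ((q : ℝ)) ≠ 0 := by positivity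
  set m : ℤ := (n : ℤ) * q + p with hmdef
  set C : ℝ := (Nat.factorial (n - 1) : ℝ) with hC
  set S : ℝ := ∑ ν ∈ Finset.range n, aco n b ν * x ^ ν with hS
  set S' : ℝ := ∑ ν ∈ Finset.range n, aco n b ν * ((ν : ℝ) * x ^ (ν - 1)) with hS'
  set A : ℝ := poch (b + 1) n with hApoch
  set F : ℝ := Fval n b x y with hFdef
  set Fx : ℝ := y * C * S' + A * ((n : ℝ) * x ^ (n - 1)) with hFxdef
  set Fy : ℝ := C * S with hFydef
  -- derivative of F in the x direction
  have hSd : HasDerivAt (fun t => ∑ ν ∈ Finset.range n, aco n b ν * t ^ ν) S' x := by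
    rw [hS']
    exact HasDerivAt.fun_sum fun ν _ => (hasDerivAt_pow ν x).const_mul _
  have hFx : HasDerivAt (fun t => Fval n b t y) Fx x := by
    have heq : (fun t => Fval n b t y)
        = fun t => y * C * (∑ ν ∈ Finset.range n, aco n b ν * t ^ ν) + A * t ^ n :=
      funext fun t => Fval_rep n b t y
    rw [heq, hFxdef]
    exact (hSd.const_mul (y * C)).add ((hasDerivAt_pow n x).const_mul A)
  -- derivative of F in the y direction
  have hFy : HasDerivAt (fun t => Fval n b x t) Fy y := by
    have heq : (fun t => Fval n b x t) = fun t => t * (C * S) + A * x ^ n := by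
      funext t
      rw [Fval_rep, ← hS, ← hC, ← hApoch]
      ring
    rw [heq, hFydef]
    simpa using ((hasDerivAt_id y).mul_const (C * S)).add_const (A * x ^ n)
  -- derivative of the numerator/denominator pieces
  have h1t : HasDerivAt (fun t : ℝ => 1 - t) (-1 : ℝ) x := by
    simpa using (hasDerivAt_id' x).const_sub (1 : ℝ)
  have hz : HasDerivAt (fun t : ℝ => (1 - t) ^ m) ((m : ℝ) * (1 - x) ^ (m - 1) * (-1)) x := by
    exact (hasDerivAt_zpow m (1 - x) (Or.inl hx)).comp x h1t
  have hd1 : HasDerivAt (fun t => y ^ q * (1 - t) ^ m / (Fval n b t y) ^ q)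
      ((y ^ q * ((m : ℝ) * (1 - x) ^ (m - 1) * (-1)) * F ^ q
        - y ^ q * (1 - x) ^ m * ((q : ℝ) * F ^ (q - 1) * Fx)) / (F ^ q) ^ 2) x := by
    exact (hz.const_mul (y ^ q)).div (hFx.pow q) (pow_ne_zero q hF)
  have hd2 : HasDerivAt (fun t => t ^ q * (1 - x) ^ m / (Fval n b x t) ^ q)
      (((q : ℝ) * y ^ (q - 1) * (1 - x) ^ m * F ^ q
        - y ^ q * (1 - x) ^ m * ((q : ℝ) * F ^ (q - 1) * Fy)) / (F ^ q) ^ 2) y := by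
    exact ((hasDerivAt_pow q y).mul_const ((1 - x) ^ m)).div (hFy.pow q) (pow_ne_zero q hF)
  rw [hd1.deriv, hd2.deriv, ← mul_div_assoc, ← mul_div_assoc, ← add_div,
    div_eq_zero_iff]
  left
  -- key algebraic facts
  have hPDE : x * (1 - x) * Fx + y * ((n : ℝ) + b * x - y) * Fy = ((n : ℝ) - n * x - y) * F := by
    rw [hFxdef, hFydef, hFdef, hS, hS', hC, hApoch]
    exact pde n hn b x y
  have hqb : (q : ℝ) * b = (p : ℝ) := by rw [hb]; field_simp
  have hm1 : (1 - x) ^ m = (1 - x) ^ (m - 1) * (1 - x) := by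
    rw [← zpow_add_one₀ hx (m - 1), sub_add_cancel]
  have hsplit : ∀ a : ℝ, a ^ q = a ^ (q - 1) * a := by
    intro a
    conv_lhs => rw [show q = (q - 1) + 1 from (Nat.succ_pred_eq_of_pos hq).symm]
    rw [pow_succ]
  have hmc : ((m : ℤ) : ℝ) = (n : ℝ) * (q : ℝ) + (p : ℝ) := by
    rw [hmdef]; push_cast; ring
  rw [hm1, hsplit y, hsplit F, hmc]
  linear_combination (-(q : ℝ) * y ^ (q - 1) * (1 - x) ^ (m - 1) * F ^ (q - 1) * y * (1 - x)) * hPDE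
    + (y ^ (q - 1) * (1 - x) ^ (m - 1) * F ^ (q - 1) * y * (1 - x) * x * F) * hqb
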